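/- arXiv:1711.07256 — 8 statements merged into one kernel-verified Lean document; each statement's English description precedes it below -/
import Mathlib

section
/- Let H be a Hilbert space, φ ∈ C¹(H), ψ_τ := φ_τ - φ with ℓ_τ := Lip[ψ_τ] < ∞, τ > 0, and let U, W ∈ H satisfy the minimality condition: (1/(2τ))|W - U|² + φ_τ(W) ≤ (1/(2τ))|V - U|² + φ_τ(V) for all V ∈ H. Then |(W - U)/τ + ∇φ(W)| ≤ ℓ_τ. -/
open InnerProductSpace Filter Set Topology

theorem minimizing_movement_euler_estimate
    {H : Type*} [NormedAddCommGroup H] [InnerProductSpace ℝ H] [CompleteSpace H]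
    (φ φτ : H → ℝ) (hφ : ContDiff ℝ 1 φ)
    (τ ℓ : ℝ) (hτ : 0 < τ) (hℓ : 0 ≤ ℓ)
    (hLip : ∀ x y : H, (φτ y - φ y) - (φτ x - φ x) ≤ ℓ * ‖y - x‖)
    (U W : H)
    (hmin : ∀ V : H, 1 / (2 * τ) * ‖W - U‖ ^ 2 + φτ W ≤ 1 / (2 * τ) * ‖V - U‖ ^ 2 + φτ V) :
    ‖τ⁻¹ • (W - U) + gradient φ W‖ ≤ ℓ := by
  set g : H := τ⁻¹ • (W - U) + gradient φ W with hg
  set a : H := W - U with ha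
  set F : ℝ → ℝ := fun t => 1 / (2 * τ) * ‖a - t • g‖ ^ 2 + φ (W - t • g) + ℓ * t * ‖g‖ with hF
  have hdiff : DifferentiableAt ℝ φ W := (hφ.differentiable one_ne_zero).differentiableAt
  have hgrad : HasGradientAt φ (gradient φ W) W := hdiff.hasGradientAt
  have hline : HasDerivAt (fun t : ℝ => W - t • g) (-g) 0 := by
    simpa using ((hasDerivAt_id (0:ℝ)).smul_const g).const_sub W
  have hW0 : W = W - (0:ℝ) • g := by simp
  have hcomp : HasDerivAt (fun t : ℝ => φ (W - t • g)) (inner ℝ (gradient φ W) (-g) : ℝ) 0 := by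
    have hF' : HasFDerivAt φ ((toDual ℝ H) (gradient φ W)) (W - (0:ℝ) • g) :=
      hW0 ▸ hgrad.hasFDerivAt
    have := hF'.comp_hasDerivAt 0 hline
    simpa [InnerProductSpace.toDual_apply_apply, Function.comp_def] using this
  have hquad : HasDerivAt (fun t : ℝ => 1 / (2 * τ) * ‖a - t • g‖ ^ 2)
      (1 / (2 * τ) * (-2 * inner ℝ a g)) 0 := by
    have heq : ∀ t : ℝ, ‖a - t • g‖ ^ 2 = ‖a‖ ^ 2 - (2 * inner ℝ a g) * t + ‖g‖ ^ 2 * t ^ 2 := by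
      intro t
      rw [norm_sub_sq_real]
      simp only [real_inner_smul_right, norm_smul, mul_pow, Real.norm_eq_abs, sq_abs]
      ring
    have h0 : HasDerivAt (fun t : ℝ => ‖a‖ ^ 2 - (2 * inner ℝ a g) * t + ‖g‖ ^ 2 * t ^ 2)
        (-2 * inner ℝ a g : ℝ) 0 := by
      have h1 := ((hasDerivAt_id (0:ℝ)).const_mul (2 * (inner ℝ a g : ℝ))).const_sub (‖a‖^2)
      have h2 := ((hasDerivAt_pow 2 (0:ℝ)).const_mul (‖g‖^2))
      simpa [Pi.add_def] using h1.add h2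
    have h3 := h0.const_mul (1 / (2 * τ))
    refine HasDerivAt.congr_deriv (h3.congr_of_eventuallyEq ?_) (by ring)
    filter_upwards with t using by rw [heq]
  have hlin : HasDerivAt (fun t : ℝ => ℓ * t * ‖g‖) (ℓ * ‖g‖) 0 := by
    simpa [mul_comm, mul_assoc] using ((hasDerivAt_id (0:ℝ)).const_mul ℓ).mul_const ‖g‖
  have hFderiv : HasDerivAt F (-‖g‖ ^ 2 + ℓ * ‖g‖) 0 := by
    have hD := (hquad.add hcomp).add hlin
    refine hD.congr_deriv ?_
    have hτ' : τ ≠ 0 := ne_of_gt hτ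
    have hgs : (inner ℝ g g : ℝ) = ‖g‖ ^ 2 := real_inner_self_eq_norm_sq g
    have hA : (inner ℝ a g : ℝ) = τ * (inner ℝ (τ⁻¹ • a) g : ℝ) := by
      rw [real_inner_smul_left]; field_simp
    have hsplit : (inner ℝ (τ⁻¹ • a) g : ℝ) + (inner ℝ (gradient φ W) g : ℝ) = ‖g‖ ^ 2 := by
      rw [← inner_add_left, ← hg, hgs]
    rw [inner_neg_right, hA]
    have h1 : 1 / (2 * τ) * (-2 * (τ * (inner ℝ (τ⁻¹ • a) g : ℝ)))
        = -(inner ℝ (τ⁻¹ • a) g : ℝ) := by field_simp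
    linarith [hsplit, h1]
  have hFmin : ∀ t : ℝ, 0 ≤ t → F 0 ≤ F t := by
    intro t ht
    have h1 := hmin (W - t • g)
    have h2 := hLip W (W - t • g)
    have hnorm : ‖W - t • g - W‖ = t * ‖g‖ := by
      simp [norm_smul, abs_of_nonneg ht]
    rw [hnorm] at h2
    have hVU : W - t • g - U = a - t • g := by rw [ha]; abel
    rw [hVU] at h1
    simp only [hF]
    simp only [zero_smul, sub_zero, mul_zero, zero_mul, add_zero]
    nlinarith [h1, h2]
  have hD : 0 ≤ -‖g‖ ^ 2 + ℓ * ‖g‖ := by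
    have hslope : Tendsto (slope F 0) (𝓝[≠] (0:ℝ)) (𝓝 (-‖g‖ ^ 2 + ℓ * ‖g‖)) :=
      hasDerivAt_iff_tendsto_slope.mp hFderiv
    have hsub : 𝓝[Ioi (0:ℝ)] 0 ≤ 𝓝[≠] (0:ℝ) :=
      nhdsWithin_mono 0 (fun x hx => ne_of_gt hx)
    refine ge_of_tendsto (hslope.mono_left hsub) ?_
    filter_upwards [self_mem_nhdsWithin] with t ht
    have ht' : (0:ℝ) < t := ht
    rw [slope_def_field]
    simp only [sub_zero]
    exact div_nonneg (sub_nonneg.mpr (hFmin t ht'.le)) ht'.le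
  rcases eq_or_lt_of_le (norm_nonneg g) with h0 | h0
  · rw [← h0]; exact hℓ
  · nlinarith [hD]
end

section
/- Let H be a Hilbert space, φ ∈ C¹(H), u₀ ∈ H, τ* > 0, and suppose inf_V { (1/(2τ*))|V - u₀|² + φ_{τ*}(V) } = -A > -∞, where Lip[φ_{τ*} - φ] ≤ ℓ. Then φ satisfies the quadratic lower bound: φ(x) ≥ (φ(u₀) - φ_{τ*}(u₀)) - A - ℓ/2 - ((ℓτ* + 1)/(2τ*))|x - u₀|² for every x ∈ H. -/
theorem quadratic_lower_bound_from_scheme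
    {H : Type*} [NormedAddCommGroup H] [InnerProductSpace ℝ H] [CompleteSpace H]
    (φ φτ : H → ℝ) (hφ : ContDiff ℝ 1 φ)
    (u₀ : H) (τs A ℓ : ℝ) (hτ : 0 < τs) (hℓ : 0 ≤ ℓ)
    (hinf : ∀ V : H, -A ≤ 1 / (2 * τs) * ‖V - u₀‖ ^ 2 + φτ V)
    (hLip : ∀ x y : H, (φτ y - φ y) - (φτ x - φ x) ≤ ℓ * ‖y - x‖) :
    ∀ x : H, (φ u₀ - φτ u₀) - A - ℓ / 2 - ((ℓ * τs + 1) / (2 * τs)) * ‖x - u₀‖ ^ 2 ≤ φ x := by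
  intro x
  have h1 := hinf x
  have h2 := hLip u₀ x
  have hr : (0:ℝ) ≤ ‖x - u₀‖ := norm_nonneg _
  set r := ‖x - u₀‖ with hrdef
  have hτ2 : (0:ℝ) < 2 * τs := by linarith
  have heq : (ℓ * τs + 1) / (2 * τs) * r ^ 2 = ℓ / 2 * r ^ 2 + r ^ 2 / (2 * τs) := by
    field_simp
  rw [heq] at *
  set s := r ^ 2 / (2 * τs) with hs
  have h1' : -A ≤ s + φτ x := by
    have : 1 / (2 * τs) * r ^ 2 = s := by rw [hs]; ring
    linarith [hinf x, this.symm.le, this.le]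
  nlinarith [mul_nonneg hℓ (sq_nonneg (r - 1))]
end

section
/- Let H be a Hilbert space, 𝒰 ⊂ H nonempty compact, φ ∈ C¹(H), λ ≥ 0, η ≥ 0, τ > 0, x ∈ 𝒰, and let y ∈ H be an η-approximate minimizer of w ↦ (1/(2τ))|w - x|² + φ(w) + λ·dist(w, 𝒰), i.e. the value at y exceeds the value at any w by at most η|w - y|. Then the vector ξ := (y - x)/τ + ∇φ(y) satisfies |ξ| ≤ λ + η; moreover, if y ∉ 𝒰 then |ξ| ≥ λ - η. -/
open Metric Set Filter
open scoped RealInnerProductSpace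

private lemma aux_slope_le (h : ℝ → ℝ) (c a : ℝ) (hd : HasDerivAt h c 0)
    (hb : ∀ t ∈ Set.Ioo (0:ℝ) 1, a * t ≤ h t - h 0) : a ≤ c := by
  have hdw : HasDerivWithinAt h c (Set.Ioi 0) 0 := hd.hasDerivWithinAt
  rw [hasDerivWithinAt_iff_tendsto_slope] at hdw
  have hss : Set.Ioi (0:ℝ) \ {0} = Set.Ioi 0 :=
    Set.diff_singleton_eq_self (by simp)
  rw [hss] at hdw
  refine ge_of_tendsto hdw ?_
  filter_upwards [Ioo_mem_nhdsGT_of_mem (Set.mem_Ico.2 ⟨le_refl (0:ℝ), one_pos⟩)] with t ht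
  have ht0 : 0 < t := ht.1
  have hbt := hb t ht
  rw [slope_def_field]
  have : a ≤ (h t - h 0) / t := (le_div_iff₀ ht0).2 (by linarith)
  simpa using this

private lemma aux_line_deriv
    {H : Type*} [NormedAddCommGroup H] [InnerProductSpace ℝ H] [CompleteSpace H]
    (φ : H → ℝ) (hφ : ContDiff ℝ 1 φ) (τ : ℝ) (hτ : 0 < τ) (x y v : H) :
    HasDerivAt (fun t : ℝ => 1 / (2 * τ) * ‖y + t • v - x‖ ^ 2 + φ (y + t • v))
      ⟪τ⁻¹ • (y - x) + gradient φ y, v⟫ 0 := by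
  set I : ℝ := ⟪y - x, v⟫ with hI
  set N : ℝ := ‖v‖ ^ 2 with hN
  have hline : HasDerivAt (fun t : ℝ => y + t • v) v 0 := by
    simpa using ((hasDerivAt_id (0:ℝ)).smul_const v).const_add y
  -- φ part
  have hφd : HasFDerivAt φ ((InnerProductSpace.toDual ℝ H) (gradient φ y)) y :=
    ((hφ.differentiable one_ne_zero) y).hasGradientAt.hasFDerivAt
  have hφline : HasDerivAt (fun t : ℝ => φ (y + t • v)) ⟪gradient φ y, v⟫ 0 := by
    have hφd' : HasFDerivAt φ ((InnerProductSpace.toDual ℝ H) (gradient φ y))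
        (y + (0:ℝ) • v) := by simpa using hφd
    have := hφd'.comp_hasDerivAt 0 hline
    simp only [InnerProductSpace.toDual_apply_apply] at this; exact this
  -- quadratic part
  have h1 : HasDerivAt (fun t : ℝ => I * t) I 0 := by
    simpa using (hasDerivAt_id (0:ℝ)).const_mul I
  have h2 : HasDerivAt (fun t : ℝ => t ^ 2 * N) 0 0 := by
    simpa using (hasDerivAt_pow 2 (0:ℝ)).mul_const N
  have hp : HasDerivAt (fun t : ℝ => ‖y - x‖ ^ 2 + 2 * (I * t) + t ^ 2 * N) (2 * I) 0 := by
    have h := (((h1.const_mul 2).const_add (‖y - x‖ ^ 2)).add h2); simp only [add_zero] at h; exact h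
  have hq : HasDerivAt (fun t : ℝ => 1 / (2 * τ) * ‖y + t • v - x‖ ^ 2) (τ⁻¹ * I) 0 := by
    have heq : (fun t : ℝ => 1 / (2 * τ) * ‖y + t • v - x‖ ^ 2)
        = fun t : ℝ => 1 / (2 * τ) * (‖y - x‖ ^ 2 + 2 * (I * t) + t ^ 2 * N) := by
      funext t
      have h3 : y + t • v - x = (y - x) + t • v := by abel
      rw [h3, norm_add_sq_real, real_inner_smul_right, norm_smul, mul_pow,
        Real.norm_eq_abs, sq_abs, ← hI, ← hN]
      ring
    rw [heq]
    have := hp.const_mul (1 / (2 * τ))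
    have hd : 1 / (2 * τ) * (2 * I) = τ⁻¹ * I := by field_simp
    rwa [hd] at this
  have := hq.add hφline
  have hsum : τ⁻¹ * I + ⟪gradient φ y, v⟫ = ⟪τ⁻¹ • (y - x) + gradient φ y, v⟫ := by
    rw [inner_add_left, real_inner_smul_left]
  rwa [hsum] at this

theorem penalized_approximate_minimizer_estimate
    {H : Type*} [NormedAddCommGroup H] [InnerProductSpace ℝ H] [CompleteSpace H]
    (φ : H → ℝ) (hφ : ContDiff ℝ 1 φ)
    (U : Set H) (hUc : IsCompact U) (hUne : U.Nonempty)
    (lam η τ : ℝ) (hlam : 0 ≤ lam) (hη : 0 ≤ η) (hτ : 0 < τ)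
    (x : H) (hx : x ∈ U) (y : H)
    (hmin : ∀ w : H,
      1 / (2 * τ) * ‖y - x‖ ^ 2 + φ y + lam * Metric.infDist y U ≤
        1 / (2 * τ) * ‖w - x‖ ^ 2 + φ w + lam * Metric.infDist w U + η * ‖w - y‖) :
    ‖τ⁻¹ • (y - x) + gradient φ y‖ ≤ lam + η ∧
      (y ∉ U → lam - η ≤ ‖τ⁻¹ • (y - x) + gradient φ y‖) := by
  set ξ : H := τ⁻¹ • (y - x) + gradient φ y with hξ
  -- general directional estimate
  have key : ∀ v : H, ∀ a : ℝ,
      (∀ t ∈ Set.Ioo (0:ℝ) 1,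
        a * t ≤ 1 / (2 * τ) * ‖y + t • v - x‖ ^ 2 + φ (y + t • v)
          - (1 / (2 * τ) * ‖y - x‖ ^ 2 + φ y)) → a ≤ ⟪ξ, v⟫ := by
    intro v a hb
    refine aux_slope_le _ _ _ (aux_line_deriv φ hφ τ hτ x y v) ?_
    intro t ht
    simpa using hb t ht
  constructor
  · -- upper bound with v = -ξ
    have hdir : -((lam + η) * ‖ξ‖) ≤ ⟪ξ, -ξ⟫ := by
      apply key
      intro t ht
      have hmw := hmin (y + t • (-ξ))
      have hlip : Metric.infDist (y + t • (-ξ)) U ≤ Metric.infDist y U + t * ‖ξ‖ := by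
        have := Metric.infDist_le_infDist_add_dist (x := y + t • (-ξ)) (y := y) (s := U)
        have hd : dist (y + t • (-ξ)) y = t * ‖ξ‖ := by
          rw [dist_eq_norm]
          simp [norm_smul, Real.norm_eq_abs, abs_of_pos ht.1]
        linarith [this, hd.le]
      have hnw : ‖y + t • (-ξ) - y‖ = t * ‖ξ‖ := by
        simp [norm_smul, Real.norm_eq_abs, abs_of_pos ht.1]
      rw [hnw] at hmw
      nlinarith [hmw, mul_le_mul_of_nonneg_left hlip hlam]
    rw [inner_neg_right, real_inner_self_eq_norm_sq] at hdir
    nlinarith [norm_nonneg ξ]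
  · -- lower bound
    intro hyU
    obtain ⟨z, hzU, hz⟩ := hUc.exists_infDist_eq_dist hUne y
    set d : ℝ := Metric.infDist y U with hd
    have hdpos : 0 < d := (hUc.isClosed.notMem_iff_infDist_pos hUne).1 hyU
    have hnv : ‖z - y‖ = d := by
      rw [hz, dist_eq_norm, norm_sub_rev]
    have hdir : (lam - η) * d ≤ ⟪ξ, z - y⟫ := by
      apply key
      intro t ht
      have hmw := hmin (y + t • (z - y))
      have hwz : Metric.infDist (y + t • (z - y)) U ≤ (1 - t) * d := by
        have h1 : Metric.infDist (y + t • (z - y)) U ≤ dist (y + t • (z - y)) z :=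
          Metric.infDist_le_dist_of_mem hzU
        have h2 : dist (y + t • (z - y)) z = (1 - t) * d := by
          rw [dist_eq_norm]
          have : y + t • (z - y) - z = -((1 - t) • (z - y)) := by
            rw [sub_smul, one_smul]; abel
          rw [this, norm_neg, norm_smul, Real.norm_eq_abs,
            abs_of_pos (by linarith [ht.2] : (0:ℝ) < 1 - t), hnv]
        linarith [h1, h2.le]
      have hnw : ‖y + t • (z - y) - y‖ = t * d := by
        simp [norm_smul, Real.norm_eq_abs, abs_of_pos ht.1, hnv]
      rw [hnw] at hmw
      nlinarith [hmw, mul_le_mul_of_nonneg_left hwz hlam]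
    have hcs : ⟪ξ, z - y⟫ ≤ ‖ξ‖ * d := by
      calc ⟪ξ, z - y⟫ ≤ ‖ξ‖ * ‖z - y‖ := real_inner_le_norm ξ (z - y)
        _ = ‖ξ‖ * d := by rw [hnv]
    have := hdir.trans hcs
    exact le_of_mul_le_mul_right (by linarith) hdpos
end

section
/- Let φ : ℝ → ℝ be C¹ (H = ℝ) and u a C¹ solution of u'(t) = -φ'(u(t)) on [0,∞). Then u is monotone: u is either nondecreasing on [0,∞) or nonincreasing on [0,∞). -/
open Set Filter Topology

-- if derivative positive at x, some point to the right is larger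
lemma aux_exists_gt_right {f : ℝ → ℝ} {d x b : ℝ} (h : HasDerivAt f d x)
    (hd : 0 < d) (hxb : x < b) : ∃ t ∈ Ioo x b, f x < f t := by
  have hs := hasDerivAt_iff_tendsto_slope.mp h
  have h1 : ∀ᶠ t in 𝓝[≠] x, 0 < slope f x t := hs.eventually (eventually_gt_nhds hd)
  have h2 : ∀ᶠ t in 𝓝[>] x, 0 < slope f x t :=
    h1.filter_mono (nhdsWithin_mono x fun y hy => ne_of_gt hy)
  have h3 : ∀ᶠ t in 𝓝[>] x, t ∈ Ioo x b :=
    eventually_of_mem (Ioo_mem_nhdsGT_of_mem ⟨le_refl x, hxb⟩) fun y hy => hy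
  obtain ⟨t, hslope, ht⟩ := (h2.and h3).exists
  refine ⟨t, ht, ?_⟩
  have htx : (0:ℝ) < t - x := sub_pos.mpr ht.1
  have h' := mul_pos hslope htx
  rw [slope_def_field, div_mul_cancel₀ _ htx.ne'] at h'
  linarith

-- if derivative negative at x, some point to the left is larger
lemma aux_exists_gt_left {f : ℝ → ℝ} {d x a : ℝ} (h : HasDerivAt f d x)
    (hd : d < 0) (hax : a < x) : ∃ t ∈ Ioo a x, f x < f t := by
  have hs := hasDerivAt_iff_tendsto_slope.mp h
  have h1 : ∀ᶠ t in 𝓝[≠] x, slope f x t < 0 := hs.eventually (eventually_lt_nhds hd)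
  have h2 : ∀ᶠ t in 𝓝[<] x, slope f x t < 0 :=
    h1.filter_mono (nhdsWithin_mono x fun y hy => ne_of_lt hy)
  have h3 : ∀ᶠ t in 𝓝[<] x, t ∈ Ioo a x :=
    eventually_of_mem (Ioo_mem_nhdsLT_of_mem ⟨hax, le_refl x⟩) fun y hy => hy
  obtain ⟨t, hslope, ht⟩ := (h2.and h3).exists
  refine ⟨t, ht, ?_⟩
  have htx : t - x < 0 := sub_neg.mpr ht.2
  have h' := mul_pos_of_neg_of_neg hslope htx
  rw [slope_def_field, div_mul_cancel₀ _ htx.ne] at h'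
  linarith

-- energy identity: equal energies at endpoints force constancy
lemma aux_const (φ : ℝ → ℝ) (hφ : ContDiff ℝ 1 φ) (u : ℝ → ℝ)
    (hu : ∀ t ≥ (0:ℝ), HasDerivAt u (-(deriv φ (u t))) t)
    {s t : ℝ} (hs : 0 ≤ s) (hst : s ≤ t) (hE : φ (u s) = φ (u t)) :
    ∀ x ∈ Icc s t, u x = u s := by
  have hmem : ∀ x ∈ Icc s t, (0:ℝ) ≤ x := fun x hx => hs.trans hx.1
  have hEder : ∀ x ∈ Icc s t,
      HasDerivAt (fun y => φ (u y)) (deriv φ (u x) * -(deriv φ (u x))) x := fun x hx =>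
    ((hφ.differentiable one_ne_zero (u x)).hasDerivAt).comp x (hu x (hmem x hx))
  have hcontu : ContinuousOn u (Icc s t) := fun x hx =>
    (hu x (hmem x hx)).differentiableAt.continuousAt.continuousWithinAt
  have hcontE : ContinuousOn (fun y => φ (u y)) (Icc s t) :=
    hφ.continuous.comp_continuousOn hcontu
  have hanti : AntitoneOn (fun y => φ (u y)) (Icc s t) := by
    apply antitoneOn_of_deriv_nonpos (convex_Icc s t) hcontE
    · intro x hx
      rw [interior_Icc] at hx
      exact (hEder x (Ioo_subset_Icc_self hx)).differentiableAt.differentiableWithinAt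
    · intro x hx
      rw [interior_Icc] at hx
      rw [(hEder x (Ioo_subset_Icc_self hx)).deriv]
      nlinarith [sq_nonneg (deriv φ (u x))]
  have hEconst : ∀ x ∈ Icc s t, φ (u x) = φ (u s) := by
    intro x hx
    have h1 : φ (u x) ≤ φ (u s) := hanti (left_mem_Icc.mpr hst) hx hx.1
    have h2 : φ (u t) ≤ φ (u x) := hanti hx (right_mem_Icc.mpr hst) hx.2
    linarith [hE ▸ h2]
  have hu0 : ∀ x ∈ Ioo s t, deriv u x = 0 := by
    intro x hx
    have hnhds : Icc s t ∈ 𝓝 x := Icc_mem_nhds hx.1 hx.2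
    have hEc : HasDerivAt (fun y => φ (u y)) 0 x := by
      apply (hasDerivAt_const x (φ (u s))).congr_of_eventuallyEq
      filter_upwards [hnhds] with y hy
      exact hEconst y hy
    have := (hEder x (Ioo_subset_Icc_self hx)).unique hEc
    have hd0 : deriv φ (u x) = 0 := by nlinarith
    have : HasDerivAt u 0 x := by
      have h := hu x (hmem x (Ioo_subset_Icc_self hx))
      rwa [hd0, neg_zero] at h
    exact this.deriv
  have hdiff : DifferentiableOn ℝ u (interior (Icc s t)) := by
    rw [interior_Icc]
    exact fun x hx =>
      (hu x (hmem x (Ioo_subset_Icc_self hx))).differentiableAt.differentiableWithinAt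
  have hmono : MonotoneOn u (Icc s t) := by
    apply monotoneOn_of_deriv_nonneg (convex_Icc s t) hcontu hdiff
    intro x hx; rw [interior_Icc] at hx; rw [hu0 x hx]
  have hanti' : AntitoneOn u (Icc s t) := by
    apply antitoneOn_of_deriv_nonpos (convex_Icc s t) hcontu hdiff
    intro x hx; rw [interior_Icc] at hx; rw [hu0 x hx]
  intro x hx
  exact le_antisymm (hanti' (left_mem_Icc.mpr hst) hx hx.1)
    (hmono (left_mem_Icc.mpr hst) hx hx.1)

-- sign of derivative cannot flip from + to -
lemma aux_sign (φ : ℝ → ℝ) (hφ : ContDiff ℝ 1 φ) (u : ℝ → ℝ)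
    (hu : ∀ t ≥ (0:ℝ), HasDerivAt u (-(deriv φ (u t))) t)
    {a b : ℝ} (ha : 0 ≤ a) (hab : a ≤ b) (hfa : 0 < -(deriv φ (u a))) :
    0 ≤ -(deriv φ (u b)) := by
  by_contra hcon
  push_neg at hcon
  have hb : 0 ≤ b := ha.trans hab
  have hab' : a < b := lt_of_le_of_ne hab (by rintro rfl; linarith)
  have hcontu : ContinuousOn u (Icc a b) := fun x hx =>
    (hu x (ha.trans hx.1)).differentiableAt.continuousAt.continuousWithinAt
  obtain ⟨c, hc, hmax⟩ := isCompact_Icc.exists_isMaxOn (nonempty_Icc.mpr hab) hcontu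
  obtain ⟨t₁, ht₁, ht₁'⟩ := aux_exists_gt_right (hu a ha) hfa hab'
  obtain ⟨t₂, ht₂, ht₂'⟩ := aux_exists_gt_left (hu b hb) (by linarith) hab'
  have hMa : u a < u c := lt_of_lt_of_le ht₁' (hmax (Ioo_subset_Icc_self ht₁))
  have hMb : u b < u c := lt_of_lt_of_le ht₂' (hmax (Ioo_subset_Icc_self ht₂))
  set y : ℝ := (max (u a) (u b) + u c) / 2 with hy
  have hy1 : u a ≤ y := by have := le_max_left (u a) (u b); simp only [hy]; linarith [max_lt hMa hMb]
  have hy2 : u b ≤ y := by have := le_max_right (u a) (u b); simp only [hy]; linarith [max_lt hMa hMb]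
  have hy3 : y < u c := by have := max_lt hMa hMb; simp only [hy]; linarith
  obtain ⟨s, hsmem, hsy⟩ := intermediate_value_Icc hc.1
    (hcontu.mono (Icc_subset_Icc le_rfl hc.2)) (⟨hy1, hy3.le⟩ : y ∈ Icc (u a) (u c))
  obtain ⟨r, hrmem, hry⟩ := intermediate_value_Icc' hc.2
    (hcontu.mono (Icc_subset_Icc hc.1 le_rfl)) (⟨hy2, hy3.le⟩ : y ∈ Icc (u b) (u c))
  have hs0 : 0 ≤ s := ha.trans hsmem.1
  have hsr : s ≤ r := hsmem.2.trans hrmem.1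
  have hEeq : φ (u s) = φ (u r) := by rw [hsy, hry]
  have hconst := aux_const φ hφ u hu hs0 hsr hEeq
  have : u c = u s := hconst c ⟨hsmem.2, hrmem.1⟩
  rw [hsy] at this
  linarith

theorem one_dimensional_gradient_flow_monotone
    (φ : ℝ → ℝ) (hφ : ContDiff ℝ 1 φ)
    (u : ℝ → ℝ)
    (hu : ∀ t ≥ (0:ℝ), HasDerivAt u (-(deriv φ (u t))) t) :
    MonotoneOn u (Ici 0) ∨ AntitoneOn u (Ici 0) := by
  -- reflected system: v = -u solves gradient flow for ψ x = φ (-x)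
  set ψ : ℝ → ℝ := fun x => φ (-x) with hψdef
  have hψ : ContDiff ℝ 1 ψ := hφ.comp contDiff_neg
  have hψderiv : ∀ x : ℝ, deriv ψ x = -deriv φ (-x) := by
    intro x
    have h : HasDerivAt ψ (deriv φ (-x) * (-1)) x :=
      ((hφ.differentiable one_ne_zero (-x)).hasDerivAt).comp x (hasDerivAt_neg x)
    rw [h.deriv]; ring
  set v : ℝ → ℝ := fun t => -(u t) with hvdef
  have hv : ∀ t ≥ (0:ℝ), HasDerivAt v (-(deriv ψ (v t))) t := by
    intro t ht
    have h := (hu t ht).neg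
    have : -(deriv ψ (v t)) = -(-(deriv φ (u t))) := by
      simp [hψderiv, hvdef]
    rw [this]; exact h
  have aux_sign_neg : ∀ {a b : ℝ}, 0 ≤ a → a ≤ b → -(deriv φ (u a)) < 0 →
      -(deriv φ (u b)) ≤ 0 := by
    intro a b ha hab hfa
    have h1 : 0 < -(deriv ψ (v a)) := by simp [hψderiv, hvdef]; linarith
    have h2 := aux_sign ψ hψ v hv ha hab h1
    simp [hψderiv, hvdef] at h2
    linarith
  have key : (∀ t ≥ (0:ℝ), 0 ≤ -(deriv φ (u t))) ∨ (∀ t ≥ (0:ℝ), -(deriv φ (u t)) ≤ 0) := by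
    by_cases hpos : ∃ a, 0 ≤ a ∧ 0 < -(deriv φ (u a))
    · left
      obtain ⟨a, ha, hfa⟩ := hpos
      intro t ht
      rcases le_total a t with h | h
      · exact aux_sign φ hφ u hu ha h hfa
      · by_contra hneg
        push_neg at hneg
        have := aux_sign_neg ht h hneg
        linarith
    · right
      push_neg at hpos
      exact fun t ht => hpos t ht
  have hcontu : ContinuousOn u (Ici 0) := fun x hx =>
    (hu x hx).differentiableAt.continuousAt.continuousWithinAt
  have hdiff : DifferentiableOn ℝ u (interior (Ici (0:ℝ))) := by
    rw [interior_Ici]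
    exact fun x hx => (hu x (le_of_lt hx)).differentiableAt.differentiableWithinAt
  rcases key with h | h
  · left
    apply monotoneOn_of_deriv_nonneg (convex_Ici 0) hcontu hdiff
    intro x hx
    rw [interior_Ici] at hx
    rw [(hu x (le_of_lt hx)).deriv]
    exact h x (le_of_lt hx)
  · right
    apply antitoneOn_of_deriv_nonpos (convex_Ici 0) hcontu hdiff
    intro x hx
    rw [interior_Ici] at hx
    rw [(hu x (le_of_lt hx)).deriv]
    exact h x (le_of_lt hx)
end

section
/- Let H be a Hilbert space, φ ∈ C¹(H), and let u, v be C¹ solutions of the gradient flow w'(t) = -∇φ(w(t)) with u(t) = v(z(t)) for all t ≥ 0, where z : [0,∞) → [0,∞) is increasing and 1-Lipschitz with z(0) = 0. If ℒ¹({t ∈ [0,T) : ∇φ(u(t)) = 0}) = 0 for some T ∈ (0,∞], then z(t) = t for all t ∈ [0,T), and hence u = v on [0,T). -/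
open Set MeasureTheory
open scoped ENNReal

theorem reparametrization_identity_on_noncritical
    {H : Type*} [NormedAddCommGroup H] [InnerProductSpace ℝ H] [CompleteSpace H]
    (φ : H → ℝ) (hφ : ContDiff ℝ 1 φ)
    (u v : ℝ → H) (z : ℝ → ℝ)
    (hu : ∀ t ≥ (0:ℝ), HasDerivAt u (-gradient φ (u t)) t)
    (hv : ∀ t ≥ (0:ℝ), HasDerivAt v (-gradient φ (v t)) t)
    (hz0 : z 0 = 0) (hzmono : Monotone z) (hzlip : LipschitzWith 1 z)
    (huv : ∀ t ≥ (0:ℝ), u t = v (z t))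
    (T : ℝ≥0∞) (hT : 0 < T)
    (hmeas : volume {t : ℝ | 0 ≤ t ∧ ENNReal.ofReal t < T ∧ gradient φ (u t) = 0} = 0) :
    ∀ t : ℝ, 0 ≤ t → ENNReal.ofReal t < T → z t = t ∧ u t = v t := by
  -- z s ≥ 0 for s ≥ 0
  have hznn : ∀ s : ℝ, 0 ≤ s → 0 ≤ z s := fun s hs => hz0 ▸ hzmono hs
  -- z t ≤ t for t ≥ 0
  have hle : ∀ t : ℝ, 0 ≤ t → z t ≤ t := by
    intro t ht
    have := hzlip.dist_le_mul t 0
    rw [hz0] at this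
    simp only [NNReal.coe_one, one_mul, Real.dist_eq, sub_zero] at this
    calc z t ≤ |z t| := le_abs_self _
    _ ≤ |t| := this
    _ = t := abs_of_nonneg ht
  -- key: at good points, deriv z = 1
  have key : ∀ s : ℝ, 0 < s → ENNReal.ofReal s < T → DifferentiableAt ℝ z s →
      gradient φ (u s) ≠ 0 → HasDerivAt z 1 s := by
    intro s hs hsT hdz hg
    have hzs0 : (0:ℝ) ≤ z s := hznn s hs.le
    have hz : HasDerivAt z (deriv z s) s := hdz.hasDerivAt
    have h1 : HasDerivAt (v ∘ z) (deriv z s • (-gradient φ (v (z s)))) s :=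
      (hv (z s) hzs0).scomp s hz
    have heq : u =ᶠ[nhds s] (v ∘ z) := by
      filter_upwards [Ioi_mem_nhds hs] with x hx
      exact huv x (le_of_lt hx)
    have h2 : HasDerivAt u (deriv z s • (-gradient φ (v (z s)))) s :=
      h1.congr_of_eventuallyEq heq
    have h3 : deriv z s • (-gradient φ (v (z s))) = -gradient φ (u s) :=
      h2.unique (hu s hs.le)
    rw [← huv s hs.le] at h3
    have : (deriv z s - 1) • gradient φ (u s) = 0 := by
      rw [sub_smul, one_smul, sub_eq_zero]
      have := congrArg Neg.neg h3
      simpa [smul_neg] using this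
    rcases smul_eq_zero.1 this with h | h
    · have : deriv z s = 1 := by linarith [sub_eq_zero.1 (by exact_mod_cast h)]
      rwa [this] at hz
    · exact absurd h hg
  intro t ht htT
  -- the good set
  set A : Set ℝ := Ioo 0 t ∩ {x | DifferentiableAt ℝ z x ∧ deriv z x = 1} with hA
  have hAmeas : MeasurableSet A :=
    measurableSet_Ioo.inter ((measurableSet_of_differentiableAt ℝ z).inter
      ((measurable_deriv z) (measurableSet_singleton 1)))
  have hAderiv : ∀ x ∈ A, HasDerivAt z 1 x := by
    rintro x ⟨_, hd, h1⟩
    rw [← h1]; exact hd.hasDerivAt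
  -- complement is null
  have hnull : volume (Ioo 0 t \ A) = 0 := by
    have hrad : volume {x : ℝ | ¬ DifferentiableAt ℝ z x} = 0 := by
      have := hzlip.ae_differentiableAt (μ := volume)
      rwa [MeasureTheory.ae_iff] at this
    have hsub : Ioo 0 t \ A ⊆
        {x : ℝ | ¬ DifferentiableAt ℝ z x} ∪
        {x : ℝ | 0 ≤ x ∧ ENNReal.ofReal x < T ∧ gradient φ (u x) = 0} := by
      rintro x ⟨hx, hxA⟩
      by_cases hd : DifferentiableAt ℝ z x
      · right
        have hxT : ENNReal.ofReal x < T :=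
          lt_of_le_of_lt (ENNReal.ofReal_le_ofReal hx.2.le) htT
        refine ⟨hx.1.le, hxT, ?_⟩
        by_contra hg
        exact hxA ⟨hx, hd, (key x hx.1 hxT hd hg).deriv⟩
      · left; exact hd
    exact measure_mono_null hsub (le_antisymm
      (le_trans (measure_union_le _ _) (by rw [hrad, hmeas]; simp)) zero_le)
  -- volume A = ofReal t
  have hvolA : volume A = ENNReal.ofReal t := by
    have hAsub : A ⊆ Ioo 0 t := inter_subset_left
    have : Ioo 0 t \ (Ioo 0 t \ A) = A := Set.diff_diff_cancel_left hAsub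
    rw [← this, measure_diff_null hnull, Real.volume_Ioo, sub_zero]
  -- injectivity of z on A
  have hinjaux : ∀ a ∈ A, ∀ b ∈ A, a < b → z a ≠ z b := by
    intro a ha b hb h hab
    -- z constant on [a, b]
    have hconst : ∀ x ∈ Icc a b, z x = z a := by
      intro x hx
      exact le_antisymm (hab ▸ hzmono hx.2) (hzmono hx.1)
    have hud : UniqueDiffWithinAt ℝ (Icc a b) a := uniqueDiffOn_Icc h a ⟨le_refl a, h.le⟩
    have h1 : HasDerivWithinAt z 1 (Icc a b) a := (hAderiv a ha).hasDerivWithinAt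
    have h0 : HasDerivWithinAt z 0 (Icc a b) a := by
      have : HasDerivWithinAt (fun _ => z a) 0 (Icc a b) a :=
        (hasDerivAt_const a (z a)).hasDerivWithinAt
      exact this.congr hconst (hconst a ⟨le_refl a, h.le⟩)
    have e1 : derivWithin z (Icc a b) a = 1 := h1.derivWithin hud
    have e0 : derivWithin z (Icc a b) a = 0 := h0.derivWithin hud
    exact one_ne_zero (e1 ▸ e0)
  have hinj : InjOn z A := by
    intro a ha b hb hab
    rcases lt_trichotomy a b with h | h | h
    · exact absurd hab (hinjaux a ha b hb h)
    · exact h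
    · exact absurd hab.symm (hinjaux b hb a ha h)
  -- Jacobian inequality
  have hf' : ∀ x ∈ A, HasFDerivWithinAt z (ContinuousLinearMap.id ℝ ℝ) A x := by
    intro x hx
    have := (hAderiv x hx).hasFDerivAt.hasFDerivWithinAt (s := A)
    have e : ContinuousLinearMap.toSpanSingleton ℝ (1:ℝ) = ContinuousLinearMap.id ℝ ℝ := by
      ext y
      simp
    rwa [e] at this
  have hjac := lintegral_abs_det_fderiv_le_addHaar_image volume hAmeas hf' hinj
  have hdet : (∫⁻ _ in A, ENNReal.ofReal |(ContinuousLinearMap.id ℝ ℝ).det| ∂volume)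
      = volume A := by
    have : (ContinuousLinearMap.id ℝ ℝ).det = 1 := by
      simp [ContinuousLinearMap.det]
    rw [this]
    simp
  rw [hdet, hvolA] at hjac
  -- image bound
  have himg : volume (z '' A) ≤ ENNReal.ofReal (z t) := by
    have : z '' A ⊆ Icc 0 (z t) := by
      rintro _ ⟨x, hx, rfl⟩
      exact ⟨hznn x hx.1.1.le, hzmono hx.1.2.le⟩
    calc volume (z '' A) ≤ volume (Icc 0 (z t)) := measure_mono this
    _ = ENNReal.ofReal (z t) := by rw [Real.volume_Icc, sub_zero]
  have hge : t ≤ z t := by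
    have := le_trans hjac himg
    exact (ENNReal.ofReal_le_ofReal_iff (hznn t ht)).1 this
  have hzt : z t = t := le_antisymm (hle t ht) hge
  exact ⟨hzt, by rw [huv t ht, hzt]⟩
end

section
/- Let H be a Hilbert space, φ ∈ C¹(H), and u, v C¹ solutions of the gradient flow with u(t) = v(z₁(t)) and v(t) = u(z₂(t)) for increasing 1-Lipschitz maps z₁, z₂ : [0,∞) → [0,∞) with zᵢ(0)=0, range v ⊆ closure(range u) and range u ⊆ closure(range v). Then u(t) = v(t) for all t ≥ 0 (the partial order ≻ on solutions is antisymmetric). -/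
open Set

theorem gradient_flow_order_antisymmetric
    {H : Type*} [NormedAddCommGroup H] [InnerProductSpace ℝ H] [CompleteSpace H]
    (φ : H → ℝ) (hφ : ContDiff ℝ 1 φ)
    (u v : ℝ → H) (z₁ z₂ : ℝ → ℝ)
    (hu : ∀ t ≥ (0:ℝ), HasDerivAt u (-gradient φ (u t)) t)
    (hv : ∀ t ≥ (0:ℝ), HasDerivAt v (-gradient φ (v t)) t)
    (hz₁mono : Monotone z₁) (hz₁lip : LipschitzWith 1 z₁) (hz₁0 : z₁ 0 = 0)
    (hz₂mono : Monotone z₂) (hz₂lip : LipschitzWith 1 z₂) (hz₂0 : z₂ 0 = 0)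
    (huv : ∀ t ≥ (0:ℝ), u t = v (z₁ t))
    (hvu : ∀ t ≥ (0:ℝ), v t = u (z₂ t))
    (hr1 : v '' Ici 0 ⊆ closure (u '' Ici 0))
    (hr2 : u '' Ici 0 ⊆ closure (v '' Ici 0)) :
    ∀ t ≥ (0:ℝ), u t = v t := by
  intro t ht
  have hz₁t0 : 0 ≤ z₁ t := hz₁0 ▸ hz₁mono ht
  have hz₂t0 : 0 ≤ z₂ t := hz₂0 ▸ hz₂mono ht
  have hlip : ∀ w : ℝ → ℝ, LipschitzWith 1 w → w 0 = 0 → (0:ℝ) ≤ w t → w t ≤ t := by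
    intro w hw hw0 hwt
    have := hw.dist_le_mul t 0
    rw [Real.dist_eq, Real.dist_eq, hw0, sub_zero, sub_zero] at this
    calc w t ≤ |w t| := le_abs_self _
      _ ≤ 1 * |t| := this
      _ = t := by rw [one_mul, abs_of_nonneg ht]
  have hz₁tle : z₁ t ≤ t := hlip z₁ hz₁lip hz₁0 hz₁t0
  have hz₂tle : z₂ t ≤ t := hlip z₂ hz₂lip hz₂0 hz₂t0
  set s := z₂ (z₁ t) with hs
  have hs0 : 0 ≤ s := hz₂0 ▸ hz₂mono hz₁t0
  have hsle : s ≤ z₂ t := hz₂mono hz₁tle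
  have hst : s ≤ t := hsle.trans hz₂tle
  have hust : u s = u t := by
    rw [huv t ht, hvu (z₁ t) hz₁t0]
  -- the energy along u
  set g : ℝ → ℝ := fun r => φ (u r) with hgdef
  have hgderiv : ∀ r ≥ (0:ℝ), HasDerivAt g (-‖gradient φ (u r)‖ ^ 2) r := by
    intro r hr
    have hd : DifferentiableAt ℝ φ (u r) := (hφ.differentiable one_ne_zero).differentiableAt
    have h1 := hd.hasGradientAt.hasFDerivAt.comp_hasDerivAt r (hu r hr)
    rw [InnerProductSpace.toDual_apply_apply, inner_neg_right, real_inner_self_eq_norm_sq] at h1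
    exact h1
  have hgcont : ContinuousOn g (Ici 0) := fun r hr =>
    ((hgderiv r hr).continuousAt).continuousWithinAt
  have hganti : AntitoneOn g (Ici 0) := by
    apply antitoneOn_of_deriv_nonpos (convex_Ici 0) hgcont
    · intro x hx
      rw [interior_Ici] at hx
      exact ((hgderiv x hx.le).differentiableAt).differentiableWithinAt
    · intro x hx
      rw [interior_Ici] at hx
      rw [(hgderiv x hx.le).deriv]
      simpa using sq_nonneg ‖gradient φ (u x)‖
  have hgconst : ∀ r ∈ Icc s t, g r = g t := by
    intro r hr
    have hr0 : (0:ℝ) ≤ r := hs0.trans hr.1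
    have h1 : g t ≤ g r := hganti hr0 (mem_Ici.2 ht) hr.2
    have h2 : g r ≤ g s := hganti hs0 hr0 hr.1
    have h3 : g s = g t := by simp only [hgdef, hust]
    linarith
  -- gradient vanishes on [s, t)
  have hgrad0 : ∀ x ∈ Ico s t, gradient φ (u x) = 0 := by
    intro x hx
    have hx0 : (0:ℝ) ≤ x := hs0.trans hx.1
    have h1 : HasDerivWithinAt g (-‖gradient φ (u x)‖ ^ 2) (Ici x) x :=
      (hgderiv x hx0).hasDerivWithinAt
    have hmem : Icc x t ∈ nhdsWithin x (Ici x) := by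
      rw [← Ici_inter_Iic]
      exact Filter.inter_mem self_mem_nhdsWithin
        (mem_nhdsWithin_of_mem_nhds (Iic_mem_nhds hx.2))
    have heq : g =ᶠ[nhdsWithin x (Ici x)] fun _ => g t := by
      filter_upwards [hmem] with y hy
      exact hgconst y ⟨hx.1.trans hy.1, hy.2⟩
    have h2 : HasDerivWithinAt g 0 (Ici x) x :=
      (hasDerivWithinAt_const x (Ici x) (g t)).congr_of_eventuallyEq heq
        (hgconst x ⟨hx.1, hx.2.le⟩)
    have huniq : UniqueDiffWithinAt ℝ (Ici x) x := uniqueDiffOn_Ici x x self_mem_Ici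
    have hval : -‖gradient φ (u x)‖ ^ 2 = 0 := by
      rw [← h1.derivWithin huniq, h2.derivWithin huniq]
    have : ‖gradient φ (u x)‖ = 0 := by
      have := sq_eq_zero_iff.mp (neg_eq_zero.mp hval)
      exact this
    simp at this; simpa using this
  -- u is constant on [s, t]
  have hconst : ∀ r ∈ Icc s t, u r = u s := by
    apply constant_of_has_deriv_right_zero
    · exact fun r hr => ((hu r (hs0.trans hr.1)).continuousAt).continuousWithinAt
    · intro x hx
      have h := (hu x (hs0.trans hx.1)).hasDerivWithinAt (s := Ici x)
      rw [hgrad0 x hx, neg_zero] at h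
      exact h
  rw [hvu t ht, hconst (z₂ t) ⟨hsle, hz₂tle⟩, hust]
end

section
/- Let H be a Hilbert space, φ ∈ C¹(H), τ > 0, and let x, y, z ∈ H and λ, δ, ω ≥ 0 satisfy: |(z-x)/τ + ∇φ(z)| ≤ δ, |∇φ(w) - ∇φ(y)| ≤ ω for all w on the segment [y,z] and w = z, and suppose y is a minimizer of w ↦ φ(w) + (1/(2τ))|w-x|² + λ·ψ(w) for a nonnegative 1-Lipschitz function ψ with ψ(z) = 0 ≤ ψ(y) and the first-order condition ξ := (y-x)/τ + ∇φ(y) satisfies λ ≤ |ξ| ≤ λ + δ'. Then (τ/2)|ξ|² ≤ (1/(2τ))|τ∇φ(y) - (x - z)|² + 2|z - y|·ω, and hence λ² ≤ 2(ω² + δ²) + (4/τ)|z-y|·ω. -/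
set_option maxHeartbeats 2000000

open InnerProductSpace

theorem penalized_scheme_central_estimate
    {H : Type*} [NormedAddCommGroup H] [InnerProductSpace ℝ H] [CompleteSpace H]
    (φ : H → ℝ) (hφ : ContDiff ℝ 1 φ)
    (τ lam δ ω : ℝ) (hτ : 0 < τ) (hlam : 0 ≤ lam) (hδ : 0 ≤ δ) (hω : 0 ≤ ω)
    (x y z : H) (ψ : H → ℝ)
    (hψnn : ∀ w : H, 0 ≤ ψ w) (hψlip : LipschitzWith 1 ψ) (hψz : ψ z = 0)
    (hδz : ‖τ⁻¹ • (z - x) + gradient φ z‖ ≤ δ)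
    (hseg : ∀ w ∈ segment ℝ y z, ‖gradient φ w - gradient φ y‖ ≤ ω)
    (hmin : φ y + 1 / (2 * τ) * ‖y - x‖ ^ 2 + lam * ψ y ≤ φ z + 1 / (2 * τ) * ‖z - x‖ ^ 2)
    (hξ : lam ≤ ‖τ⁻¹ • (y - x) + gradient φ y‖) :
    (τ / 2) * ‖τ⁻¹ • (y - x) + gradient φ y‖ ^ 2 ≤
        1 / (2 * τ) * ‖τ • gradient φ y - (x - z)‖ ^ 2 + 2 * ‖z - y‖ * ω ∧
      lam ^ 2 ≤ 2 * (ω ^ 2 + δ ^ 2) + (4 / τ) * ‖z - y‖ * ω := by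
  set g := gradient φ with hg
  have hdiff : Differentiable ℝ φ := hφ.differentiable one_ne_zero
  have hgrad : ∀ w : H, HasGradientAt φ (g w) w := fun w => (hdiff w).hasGradientAt
  -- Mean value theorem estimate
  have hMVT : |φ z - φ y - ⟪g y, z - y⟫_ℝ| ≤ ω * ‖z - y‖ := by
    set f : H → ℝ := fun w => φ w - ⟪g y, w⟫_ℝ with hf
    have hfd : ∀ w ∈ segment ℝ y z, HasFDerivWithinAt f
        ((toDual ℝ H) (g w) - (toDual ℝ H) (g y)) (segment ℝ y z) w := by
      intro w _
      have h1 : HasFDerivAt φ ((toDual ℝ H) (g w)) w := (hgrad w).hasFDerivAt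
      have h2 : HasFDerivAt (fun v : H => ⟪g y, v⟫_ℝ) ((toDual ℝ H) (g y)) w := by
        exact ((toDual ℝ H) (g y)).hasFDerivAt (x := w)
      exact (h1.sub h2).hasFDerivWithinAt
    have hbound : ∀ w ∈ segment ℝ y z,
        ‖(toDual ℝ H) (g w) - (toDual ℝ H) (g y)‖ ≤ ω := by
      intro w hw
      rw [← map_sub, (toDual ℝ H).norm_map]
      exact hseg w hw
    have := Convex.norm_image_sub_le_of_norm_hasFDerivWithin_le hfd hbound
      (convex_segment y z) (left_mem_segment ℝ y z) (right_mem_segment ℝ y z)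
    have hfz : f z - f y = φ z - φ y - ⟪g y, z - y⟫_ℝ := by
      simp only [hf, inner_sub_right]; ring
    rw [hfz] at this
    simpa [Real.norm_eq_abs] using this
  have hτ0 : τ ≠ 0 := hτ.ne'
  have hinv : (0:ℝ) < τ⁻¹ := inv_pos.mpr hτ
  -- rewrite the two vectors
  have e1 : τ⁻¹ • (y - x) + g y = τ⁻¹ • ((y - x) + τ • g y) := by
    rw [smul_add, smul_smul, inv_mul_cancel₀ hτ0, one_smul]
  have e2 : τ • g y - (x - z) = (z - x) + τ • g y := by abel
  have n1 : ‖τ⁻¹ • (y - x) + g y‖ = τ⁻¹ * ‖(y - x) + τ • g y‖ := by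
    rw [e1, norm_smul, Real.norm_eq_abs, abs_of_pos hinv]
  have n2 : ‖τ • gradient φ y - (x - z)‖ = ‖(z - x) + τ • g y‖ := by rw [← hg, e2]
  have h1 : ‖(y - x) + τ • g y‖ ^ 2
      = ‖y - x‖ ^ 2 + 2 * (τ * ⟪y - x, g y⟫_ℝ) + ‖τ • g y‖ ^ 2 := by
    rw [norm_add_sq_real, real_inner_smul_right]
  have h2 : ‖(z - x) + τ • g y‖ ^ 2
      = ‖z - x‖ ^ 2 + 2 * (τ * ⟪z - x, g y⟫_ℝ) + ‖τ • g y‖ ^ 2 := by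
    rw [norm_add_sq_real, real_inner_smul_right]
  have hinner : ⟪g y, z - y⟫_ℝ = ⟪z - x, g y⟫_ℝ - ⟪y - x, g y⟫_ℝ := by
    rw [real_inner_comm]
    have : z - y = (z - x) - (y - x) := by abel
    rw [this, inner_sub_left]
  -- key identity
  have key : (τ / 2) * ‖τ⁻¹ • (y - x) + g y‖ ^ 2
      = 1 / (2 * τ) * ‖(z - x) + τ • g y‖ ^ 2
        + 1 / (2 * τ) * (‖y - x‖ ^ 2 - ‖z - x‖ ^ 2) - ⟪g y, z - y⟫_ℝ := by
    rw [n1, mul_pow, h1, h2, hinner]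
    field_simp
    ring
  -- minimality gives
  have hmin' : 1 / (2 * τ) * (‖y - x‖ ^ 2 - ‖z - x‖ ^ 2) ≤ φ z - φ y := by
    nlinarith [mul_nonneg hlam (hψnn y)]
  have habs : φ z - φ y - ⟪g y, z - y⟫_ℝ ≤ ω * ‖z - y‖ := (abs_le.mp hMVT).2
  have part1 : (τ / 2) * ‖τ⁻¹ • (y - x) + g y‖ ^ 2 ≤
      1 / (2 * τ) * ‖(z - x) + τ • g y‖ ^ 2 + 2 * ‖z - y‖ * ω := by
    have hzy : 0 ≤ ‖z - y‖ := norm_nonneg _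
    nlinarith [mul_nonneg hω hzy]
  refine ⟨by rw [n2]; exact part1, ?_⟩
  -- second part
  have hb : ‖τ⁻¹ • ((z - x) + τ • g y)‖ ≤ δ + ω := by
    have e3 : τ⁻¹ • ((z - x) + τ • g y)
        = (τ⁻¹ • (z - x) + g z) + (g y - g z) := by
      rw [smul_add, smul_smul, inv_mul_cancel₀ hτ0, one_smul]; abel
    rw [e3]
    refine (norm_add_le _ _).trans (add_le_add hδz ?_)
    rw [norm_sub_rev]
    exact hseg z (right_mem_segment ℝ y z)
  have nb : ‖(z - x) + τ • g y‖ ≤ τ * (δ + ω) := by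
    have := norm_smul τ⁻¹ ((z - x) + τ • g y)
    rw [Real.norm_eq_abs, abs_of_pos hinv] at this
    calc ‖(z - x) + τ • g y‖ = τ * ‖τ⁻¹ • ((z - x) + τ • g y)‖ := by
          rw [this]; field_simp
      _ ≤ τ * (δ + ω) := by
          exact mul_le_mul_of_nonneg_left hb hτ.le
  have hnb2 : ‖(z - x) + τ • g y‖ ^ 2 ≤ τ ^ 2 * (δ + ω) ^ 2 := by
    have hδω : 0 ≤ δ + ω := by linarith
    nlinarith [norm_nonneg ((z - x) + τ • g y)]
  have hlam2 : lam ^ 2 ≤ ‖τ⁻¹ • (y - x) + g y‖ ^ 2 := by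
    nlinarith [hξ]
  have hzy : 0 ≤ ‖z - y‖ := norm_nonneg _
  have h2τ : (0:ℝ) < 2 * τ := by linarith
  -- combine: (τ/2) lam² ≤ (τ/2)(δ+ω)² + 2‖z-y‖ω
  have hcomb : (τ / 2) * lam ^ 2 ≤ (τ / 2) * (δ + ω) ^ 2 + 2 * ‖z - y‖ * ω := by
    have h3 : 1 / (2 * τ) * ‖(z - x) + τ • g y‖ ^ 2 ≤ (τ / 2) * (δ + ω) ^ 2 := by
      have hle := mul_le_mul_of_nonneg_left hnb2
        (le_of_lt (by positivity : (0:ℝ) < 1 / (2 * τ)))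
      have heq : 1 / (2 * τ) * (τ ^ 2 * (δ + ω) ^ 2) = τ / 2 * (δ + ω) ^ 2 := by
        field_simp
      linarith
    nlinarith [part1]
  have hfin : lam ^ 2 ≤ (δ + ω) ^ 2 + (4 / τ) * ‖z - y‖ * ω := by
    have := mul_le_mul_of_nonneg_left hcomb (by positivity : (0:ℝ) ≤ 2 / τ)
    calc lam ^ 2 = (2 / τ) * ((τ / 2) * lam ^ 2) := by field_simp
      _ ≤ (2 / τ) * ((τ / 2) * (δ + ω) ^ 2 + 2 * ‖z - y‖ * ω) := this
      _ = (δ + ω) ^ 2 + (4 / τ) * ‖z - y‖ * ω := by field_simp; ring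
  nlinarith [sq_nonneg (δ - ω)]
end

section
/- Let H be a finite-dimensional Hilbert space, φ ∈ C¹(H), and suppose φ_τ : H → ℝ (τ > 0) satisfy lim_{τ↓0} Lip[φ_τ - φ] = 0. Suppose there exist a vanishing sequence τ(k) ↓ 0 and piecewise-constant discrete solutions U_{τ(k)} of the minimizing movement scheme with step τ(k) and energy φ_{τ(k)} starting from u₀ — i.e. U⁰ = u₀, Uⁿ ∈ argmin_V [ (1/(2τ))|V - U^{n-1}|² + φ_τ(V) ], U_τ(t) = Uⁿ on ((n-1)τ, nτ] — such that U_{τ(k)}(t) → u(t) for every t ∈ [0,T]. Then u ∈ C¹([0,T]; H) and u'(t) = -∇φ(u(t)) on [0,T] with u(0) = u₀. -/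
open Set Filter

lemma grad_inner {H : Type*} [NormedAddCommGroup H] [InnerProductSpace ℝ H]
    [FiniteDimensional ℝ H] (φ : H → ℝ) (hφ : ContDiff ℝ 1 φ) (x v : H) :
    fderiv ℝ φ x v = inner ℝ (gradient φ x) v := by
  have := (hφ.differentiable one_ne_zero x).hasGradientAt
  rw [hasGradientAt_iff_hasFDerivAt] at this
  rw [this.fderiv]; simp [InnerProductSpace.toDual]

lemma euler_est {H : Type*} [NormedAddCommGroup H] [InnerProductSpace ℝ H]
    [FiniteDimensional ℝ H] (φ : H → ℝ) (hφ : ContDiff ℝ 1 φ)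
    (F : H → ℝ) (l τ : ℝ) (hτ : 0 < τ) (hl : 0 ≤ l)
    (hF : ∀ x y : H, (F y - φ y) - (F x - φ x) ≤ l * ‖y - x‖)
    (x W : H)
    (hmin : ∀ V : H, 1 / (2 * τ) * ‖W - x‖ ^ 2 + F W ≤ 1 / (2 * τ) * ‖V - x‖ ^ 2 + F V) :
    ‖W - x + τ • gradient φ W‖ ≤ τ * l := by
  set p : H := τ⁻¹ • (W - x) + gradient φ W with hp
  have key : ‖p‖ ≤ l := by
    set a : H := W - x with ha
    -- g s ≥ 0 for s ≥ 0
    set g : ℝ → ℝ := fun s =>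
      (s ^ 2 * ‖p‖ ^ 2 - 2 * s * (inner ℝ a p : ℝ)) / (2 * τ)
        + (φ (W - s • p) - φ W) + l * ‖p‖ * s with hg
    have hgnn : ∀ s ∈ Ioi (0:ℝ), 0 ≤ g s := by
      intro s hs
      have hs' : (0:ℝ) < s := hs
      have h1 := hmin (W - s • p)
      have h2 := hF (W - s • p) W
      have hnorm : ‖W - s • p - W‖ = s * ‖p‖ := by
        rw [show W - s • p - W = -(s • p) by abel, norm_neg, norm_smul, Real.norm_eq_abs,
          abs_of_pos hs']
      have hexp : ‖W - s • p - x‖ ^ 2 = ‖a‖ ^ 2 - 2 * s * (inner ℝ a p : ℝ) + s ^ 2 * ‖p‖ ^ 2 := by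
        have : W - s • p - x = a - s • p := by rw [ha]; abel
        rw [this, norm_sub_sq_real, real_inner_smul_right, norm_smul, Real.norm_eq_abs,
          mul_pow, sq_abs]
        ring
      have h2' : F (W - s • p) - F W ≤ φ (W - s • p) - φ W + l * (s * ‖p‖) := by
        have := hF W (W - s • p)
        rw [hnorm] at this; linarith
      rw [hexp] at h1
      have hdiv : 1 / (2 * τ) * (‖a‖ ^ 2 - 2 * s * (inner ℝ a p : ℝ) + s ^ 2 * ‖p‖ ^ 2)
          - 1 / (2 * τ) * ‖a‖ ^ 2 = (s ^ 2 * ‖p‖ ^ 2 - 2 * s * (inner ℝ a p : ℝ)) / (2 * τ) := by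
        field_simp; ring
      rw [hg]
      dsimp only
      linarith [h1, h2', hdiv]
    -- derivative of g at 0
    have hφd : HasDerivAt (fun s : ℝ => φ (W - s • p)) (fderiv ℝ φ W (-p)) 0 := by
      have hc : HasDerivAt (fun s : ℝ => W - s • p) (-p) 0 := by
        simpa using ((hasDerivAt_id (0:ℝ)).smul_const p).const_sub W
      have := ((hφ.differentiable one_ne_zero (W - (0:ℝ) • p)).hasFDerivAt).comp_hasDerivAt 0 hc
      simp at this ⊢
      exact this
    have hgd : HasDerivAt g (-(inner ℝ a p : ℝ) / τ + fderiv ℝ φ W (-p) + l * ‖p‖) 0 := by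
      have h1 : HasDerivAt (fun s : ℝ => (s ^ 2 * ‖p‖ ^ 2 - 2 * s * (inner ℝ a p : ℝ)) / (2 * τ))
          (-(inner ℝ a p : ℝ) / τ) 0 := by
        have : HasDerivAt (fun s : ℝ => (s ^ 2 * ‖p‖ ^ 2 - 2 * s * (inner ℝ a p : ℝ)))
            (2 * 0 * ‖p‖ ^ 2 - 2 * (inner ℝ a p : ℝ)) 0 := by
          have := ((hasDerivAt_pow 2 (0:ℝ)).mul_const (‖p‖ ^ 2)).sub
            (((hasDerivAt_id (0:ℝ)).const_mul 2).mul_const (inner ℝ a p : ℝ))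
          simp [mul_comm, mul_assoc, mul_left_comm] at this ⊢
          exact this
        have h2 := this.div_const (2 * τ)
        have : (2 * 0 * ‖p‖ ^ 2 - 2 * (inner ℝ a p : ℝ)) / (2 * τ) = -(inner ℝ a p : ℝ) / τ := by
          field_simp; ring
        rwa [this] at h2
      have h3 : HasDerivAt (fun s : ℝ => l * ‖p‖ * s) (l * ‖p‖) 0 := by
        simpa using (hasDerivAt_id (0:ℝ)).const_mul (l * ‖p‖)
      have := (h1.add (hφd.sub_const (φ W))).add h3
      simp at this ⊢
      exact this
    -- slope nonneg ⇒ derivative nonneg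
    have hg0 : g 0 = 0 := by simp [hg]
    have hslope : ∀ s ∈ Ioi (0:ℝ), 0 ≤ slope g 0 s := by
      intro s hs
      have hs' : (0:ℝ) < s := hs
      rw [slope_def_field]
      have := hgnn s hs
      rw [hg0] at *
      have : 0 ≤ g s := hgnn s hs
      simp only [sub_zero, hg0]
      positivity
    have htend : Tendsto (slope g 0) (nhdsWithin 0 (Ioi 0))
        (nhds (-(inner ℝ a p : ℝ) / τ + fderiv ℝ φ W (-p) + l * ‖p‖)) := by
      have := hgd.hasDerivWithinAt (s := Ioi (0:ℝ))
      rw [hasDerivWithinAt_iff_tendsto_slope] at this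
      simpa [Set.diff_eq, Ioi_inter_Ioi] using this.mono_left
        (nhdsWithin_mono _ (by intro y hy; exact ⟨hy, ne_of_gt hy⟩))
    have hDnn : 0 ≤ -(inner ℝ a p : ℝ) / τ + fderiv ℝ φ W (-p) + l * ‖p‖ :=
      ge_of_tendsto htend (eventually_mem_nhdsWithin.mono hslope)
    -- identify D = -‖p‖² + l‖p‖
    have hfd : fderiv ℝ φ W (-p) = -(inner ℝ (gradient φ W) p : ℝ) := by
      rw [grad_inner φ hφ, inner_neg_right]
    have hip : (inner ℝ a p : ℝ) / τ + (inner ℝ (gradient φ W) p : ℝ) = ‖p‖ ^ 2 := by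
      have : (inner ℝ p p : ℝ) = ‖p‖ ^ 2 := real_inner_self_eq_norm_sq p
      rw [← this, hp]
      rw [inner_add_left, real_inner_smul_left]
      field_simp
    have h5 : ‖p‖ ^ 2 ≤ l * ‖p‖ := by
      rw [hfd] at hDnn
      have hnd : -(inner ℝ a p : ℝ) / τ = -((inner ℝ a p : ℝ) / τ) := neg_div _ _
      linarith [hip, hDnn, hnd]
    rcases eq_or_lt_of_le (norm_nonneg p) with h | h
    · rw [← h]; exact hl
    · have := (mul_le_mul_iff_left₀ h).mp (by nlinarith : ‖p‖ * ‖p‖ ≤ l * ‖p‖)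
      exact this
  have : W - x + τ • gradient φ W = τ • p := by
    rw [hp, smul_add, smul_smul, mul_inv_cancel₀ (ne_of_gt hτ), one_smul]
  rw [this, norm_smul, Real.norm_eq_abs, abs_of_pos hτ]
  exact mul_le_mul_of_nonneg_left key (le_of_lt hτ)

open MeasureTheory in

theorem minimizing_movements_converge_to_gradient_flow
    {H : Type*} [NormedAddCommGroup H] [InnerProductSpace ℝ H] [FiniteDimensional ℝ H]
    (φ : H → ℝ) (hφ : ContDiff ℝ 1 φ)
    (φτ : ℝ → H → ℝ) (ℓ : ℝ → ℝ) (hℓnn : ∀ τ, 0 ≤ ℓ τ)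
    (hℓ0 : Tendsto ℓ (nhdsWithin 0 (Ioi 0)) (nhds 0))
    (hℓ : ∀ τ > (0:ℝ), ∀ x y : H, (φτ τ y - φ y) - (φτ τ x - φ x) ≤ ℓ τ * ‖y - x‖)
    (u₀ : H) (T : ℝ) (hT : 0 < T) (u : ℝ → H)
    (τk : ℕ → ℝ) (hτpos : ∀ k, 0 < τk k) (hτ0 : Tendsto τk atTop (nhds 0))
    (U : ℕ → ℕ → H) (hU0 : ∀ k, U k 0 = u₀)
    (hmin : ∀ k n, ∀ V : H,
      1 / (2 * τk k) * ‖U k (n + 1) - U k n‖ ^ 2 + φτ (τk k) (U k (n + 1)) ≤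
        1 / (2 * τk k) * ‖V - U k n‖ ^ 2 + φτ (τk k) V)
    (hconv : ∀ t ∈ Icc (0:ℝ) T,
      Tendsto (fun k => U k ⌈t / τk k⌉₊) atTop (nhds (u t))) :
    u 0 = u₀ ∧ ∀ t ∈ Icc (0:ℝ) T, HasDerivWithinAt u (-gradient φ (u t)) (Icc 0 T) t := by
  classical
  letI : MeasurableSpace H := borel H
  haveI : BorelSpace H := ⟨rfl⟩
  have hgradc : Continuous (gradient φ) := by
    have : gradient φ = fun x => (InnerProductSpace.toDual ℝ H).symm (fderiv ℝ φ x) := rfl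
    rw [this]
    exact (InnerProductSpace.toDual ℝ H).symm.continuous.comp (hφ.continuous_fderiv one_ne_zero)
  have hu0 : u 0 = u₀ := by
    have h0 := hconv 0 ⟨le_rfl, hT.le⟩
    simp only [zero_div, Nat.ceil_zero, hU0] at h0
    exact tendsto_nhds_unique h0 tendsto_const_nhds
  refine ⟨hu0, ?_⟩
  set N : ℕ → ℕ := fun k => ⌈T / τk k⌉₊ with hN
  have hℓτ : Tendsto (fun k => ℓ (τk k)) atTop (nhds 0) :=
    hℓ0.comp (tendsto_nhdsWithin_iff.mpr ⟨hτ0, Eventually.of_forall fun k => hτpos k⟩)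
  have heuler : ∀ k n, ‖U k (n+1) - U k n + τk k • gradient φ (U k (n+1))‖
      ≤ τk k * ℓ (τk k) := fun k n =>
    euler_est φ hφ (φτ (τk k)) (ℓ (τk k)) (τk k) (hτpos k) (hℓnn _)
      (hℓ (τk k) (hτpos k)) (U k n) (U k (n+1)) (hmin k n)
  -- energy dissipation
  have hstep : ∀ k n, 1 / (2 * τk k) * ‖U k (n+1) - U k n‖ ^ 2 + φτ (τk k) (U k (n+1))
      ≤ φτ (τk k) (U k n) := by
    intro k n
    have := hmin k n (U k n)
    simpa using this
  have hmono : ∀ k m n, m ≤ n → φτ (τk k) (U k n) ≤ φτ (τk k) (U k m) := by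
    intro k m n hmn
    induction n, hmn using Nat.le_induction with
    | base => exact le_refl _
    | succ n hmn ih =>
      have h1 := hstep k n
      have hτ' := hτpos k
      have h2 : 0 ≤ 1 / (2 * τk k) * ‖U k (n+1) - U k n‖ ^ 2 := by positivity
      linarith
  have hsq : ∀ k n, ∑ i ∈ Finset.range n, ‖U k (i+1) - U k i‖ ^ 2
      ≤ 2 * τk k * (φτ (τk k) u₀ - φτ (τk k) (U k n)) := by
    intro k n
    induction n with
    | zero => simp [hU0]
    | succ n ih =>
      rw [Finset.sum_range_succ]
      have h1 := hstep k n
      have hτ' : 0 < 2 * τk k := by have := hτpos k; linarith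
      have h1' : 1 / (2 * τk k) * ‖U k (n+1) - U k n‖ ^ 2
          ≤ φτ (τk k) (U k n) - φτ (τk k) (U k (n+1)) := by linarith
      have h2 := mul_le_mul_of_nonneg_left h1' hτ'.le
      have hX : (2 * τk k) * (1 / (2 * τk k) * ‖U k (n+1) - U k n‖ ^ 2)
          = ‖U k (n+1) - U k n‖ ^ 2 := by rw [← mul_assoc, mul_one_div_cancel hτ'.ne', one_mul]
      linarith
  -- bound on the final energy gap
  have hconvT : Tendsto (fun k => U k (N k)) atTop (nhds (u T)) := hconv T ⟨hT.le, le_rfl⟩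
  obtain ⟨C, hC⟩ : ∃ C, ∀ k, φ u₀ - φ (U k (N k)) + ℓ (τk k) * ‖u₀ - U k (N k)‖ ≤ C := by
    have htd : Tendsto (fun k => φ u₀ - φ (U k (N k)) + ℓ (τk k) * ‖u₀ - U k (N k)‖) atTop
        (nhds (φ u₀ - φ (u T) + 0 * ‖u₀ - u T‖)) := by
      exact ((tendsto_const_nhds.sub ((hφ.continuous.tendsto _).comp hconvT)).add
        (hℓτ.mul ((tendsto_const_nhds.sub hconvT).norm)))
    obtain ⟨C, hC⟩ := htd.bddAbove_range
    exact ⟨C, fun k => hC (Set.mem_range_self k)⟩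
  set C' : ℝ := max C 0 with hC'
  have hCnn : 0 ≤ C' := le_max_right _ _
  have hgap : ∀ k n, n ≤ N k → φτ (τk k) u₀ - φτ (τk k) (U k n) ≤ C' := by
    intro k n hn
    have h1 : φτ (τk k) (U k (N k)) ≤ φτ (τk k) (U k n) := hmono k n (N k) hn
    have h2 := hℓ (τk k) (hτpos k) (U k (N k)) u₀
    have h3 := hC k
    calc φτ (τk k) u₀ - φτ (τk k) (U k n) ≤ φτ (τk k) u₀ - φτ (τk k) (U k (N k)) := by linarith
    _ ≤ φ u₀ - φ (U k (N k)) + ℓ (τk k) * ‖u₀ - U k (N k)‖ := by linarith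
    _ ≤ C := h3
    _ ≤ C' := le_max_left _ _
  -- T ≤ N k * τk k and N k * τk k ≤ T + τk k
  have hTle : ∀ k, T ≤ (N k : ℝ) * τk k := by
    intro k
    have := Nat.le_ceil (T / τk k)
    have hτne := (hτpos k).ne'
    calc T = T / τk k * τk k := by field_simp
    _ ≤ (N k : ℝ) * τk k := by
        apply mul_le_mul_of_nonneg_right this (hτpos k).le
  have hNle : ∀ k, (N k : ℝ) * τk k ≤ T + τk k := by
    intro k
    have hτ' := hτpos k
    have hτne := hτ'.ne'
    have h := Nat.ceil_lt_add_one (by positivity : (0:ℝ) ≤ T / τk k)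
    have := mul_le_mul_of_nonneg_right (le_of_lt h) hτ'.le
    calc (N k : ℝ) * τk k ≤ (T / τk k + 1) * τk k := this
    _ = T + τk k := by field_simp
  -- uniform bound
  set B : ℝ := ‖u₀‖ + Real.sqrt (2 * C' * (T + 1)) with hB
  have hu0B : ‖u₀‖ ≤ B := by
    rw [hB]; nlinarith [Real.sqrt_nonneg (2 * C' * (T + 1))]
  have hbound : ∀ k, τk k ≤ 1 → ∀ n, n ≤ N k → ‖U k n‖ ≤ B := by
    intro k hk1 n hn
    have hτ' := hτpos k
    have hsum1 : ‖U k n - u₀‖ ≤ ∑ i ∈ Finset.range n, ‖U k (i+1) - U k i‖ := by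
      have htel : ∑ i ∈ Finset.range n, (U k (i+1) - U k i) = U k n - u₀ := by
        rw [Finset.sum_range_sub (fun i => U k i), hU0]
      rw [← htel]
      exact norm_sum_le _ _
    have hcs : (∑ i ∈ Finset.range n, ‖U k (i+1) - U k i‖) ^ 2
        ≤ (n : ℝ) * ∑ i ∈ Finset.range n, ‖U k (i+1) - U k i‖ ^ 2 := by
      have := sq_sum_le_card_mul_sum_sq
        (s := Finset.range n) (f := fun i => ‖U k (i+1) - U k i‖)
      simpa using this
    have hnτ : (n : ℝ) * τk k ≤ T + 1 := by
      have h1 : (n : ℝ) ≤ (N k : ℝ) := by exact_mod_cast hn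
      have := mul_le_mul_of_nonneg_right h1 (hτpos k).le
      linarith [hNle k]
    have h2 : (∑ i ∈ Finset.range n, ‖U k (i+1) - U k i‖) ^ 2 ≤ 2 * C' * (T + 1) := by
      have h3 := hsq k n
      have h4 := hgap k n hn
      have h5 : ∑ i ∈ Finset.range n, ‖U k (i+1) - U k i‖ ^ 2 ≤ 2 * τk k * C' := by
        have := mul_le_mul_of_nonneg_left h4 (by positivity : (0:ℝ) ≤ 2 * τk k)
        linarith
      calc (∑ i ∈ Finset.range n, ‖U k (i+1) - U k i‖) ^ 2
          ≤ (n : ℝ) * (2 * τk k * C') := le_trans hcs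
            (mul_le_mul_of_nonneg_left h5 (Nat.cast_nonneg n))
      _ = 2 * C' * ((n : ℝ) * τk k) := by ring
      _ ≤ 2 * C' * (T + 1) := mul_le_mul_of_nonneg_left hnτ (by positivity)
    have h6 : ‖U k n - u₀‖ ^ 2 ≤ 2 * C' * (T + 1) := by
      have hs0 : (0:ℝ) ≤ ∑ i ∈ Finset.range n, ‖U k (i+1) - U k i‖ :=
        Finset.sum_nonneg fun i _ => norm_nonneg _
      nlinarith [hsum1, h2, norm_nonneg (U k n - u₀)]
    have h7 : ‖U k n - u₀‖ ≤ Real.sqrt (2 * C' * (T + 1)) := by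
      have := Real.sqrt_le_sqrt h6
      rwa [Real.sqrt_sq (norm_nonneg _)] at this
    calc ‖U k n‖ = ‖u₀ + (U k n - u₀)‖ := by rw [add_sub_cancel]
    _ ≤ ‖u₀‖ + ‖U k n - u₀‖ := norm_add_le _ _
    _ ≤ B := by rw [hB]; linarith
  -- bound on gradient on ball
  obtain ⟨M, hMnn, hM⟩ : ∃ M, 0 ≤ M ∧ ∀ y : H, ‖y‖ ≤ B → ‖gradient φ y‖ ≤ M := by
    obtain ⟨M0, hM0⟩ := (isCompact_closedBall (0:H) B).exists_bound_of_continuousOn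
      hgradc.continuousOn
    refine ⟨max M0 0, le_max_right _ _, fun y hy => ?_⟩
    exact le_trans (hM0 y (by simpa [Metric.mem_closedBall, dist_eq_norm] using hy))
      (le_max_left _ _)
  -- the piecewise-constant gradient functions
  set v : ℕ → ℝ → H := fun k r => gradient φ (U k ⌈r / τk k⌉₊) with hv
  have hceil_meas : ∀ k, Measurable (fun r : ℝ => ⌈r / τk k⌉₊) := by
    intro k
    have hm : Monotone (fun r : ℝ => ⌈r / τk k⌉₊) := by
      intro a b hab
      exact Nat.ceil_mono (by gcongr; exact (hτpos k).le)
    exact hm.measurable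
  have hvmeas : ∀ k, Measurable (v k) := by
    intro k
    exact hgradc.measurable.comp (measurable_from_top.comp (hceil_meas k))
  have hidx : ∀ k (t : ℝ), t ≤ (N k : ℝ) * τk k → ⌈t / τk k⌉₊ ≤ N k := by
    intro k t ht
    have : t / τk k ≤ (N k : ℝ) := by
      rw [div_le_iff₀ (hτpos k)]; linarith
    calc ⌈t / τk k⌉₊ ≤ ⌈(N k : ℝ)⌉₊ := Nat.ceil_mono this
    _ = N k := Nat.ceil_natCast _
  have hvb : ∀ k, τk k ≤ 1 → ∀ r : ℝ, r ≤ (N k : ℝ) * τk k → ‖v k r‖ ≤ M := by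
    intro k hk1 r hr
    exact hM _ (hbound k hk1 _ (hidx k r hr))
  have hvint : ∀ k, τk k ≤ 1 → ∀ a b : ℝ, b ≤ (N k : ℝ) * τk k →
      IntegrableOn (v k) (Ioc a b) := by
    intro k hk1 a b hb
    apply Measure.integrableOn_of_bounded (measure_Ioc_lt_top).ne
      (hvmeas k).aestronglyMeasurable (M := M)
    refine (ae_restrict_iff' measurableSet_Ioc).mpr (Eventually.of_forall fun r hr => ?_)
    exact hvb k hk1 r (le_trans hr.2 hb)
  -- exact integral over one step
  have hpiece : ∀ (k n : ℕ), ∫ r in Ioc ((n:ℝ) * τk k) (((n:ℝ)+1) * τk k), v k r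
      = τk k • gradient φ (U k (n+1)) := by
    intro k n
    have heq : EqOn (v k) (fun _ => gradient φ (U k (n+1)))
        (Ioc ((n:ℝ) * τk k) (((n:ℝ)+1) * τk k)) := by
      intro r hr
      have hceil : ⌈r / τk k⌉₊ = n + 1 := by
        rw [Nat.ceil_eq_iff (Nat.succ_ne_zero n)]
        constructor
        · push_cast
          rw [lt_div_iff₀ (hτpos k)]
          simpa using hr.1
        · push_cast
          rw [div_le_iff₀ (hτpos k)]
          exact hr.2
      simp only [hv, hceil]
    rw [setIntegral_congr_fun measurableSet_Ioc heq, setIntegral_const, Real.volume_real_Ioc]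
    congr 1
    rw [max_eq_left (by nlinarith [hτpos k] : (0:ℝ) ≤ ((n:ℝ)+1) * τk k - (n:ℝ) * τk k)]
    ring
  -- integral over [0, n τ]
  have hIoc : ∀ k, τk k ≤ 1 → ∀ n, n ≤ N k →
      ∫ r in Ioc (0:ℝ) ((n:ℝ) * τk k), v k r
        = ∑ i ∈ Finset.range n, τk k • gradient φ (U k (i+1)) := by
    intro k hk1 n hn
    have hτ' := hτpos k
    induction n with
    | zero => simp
    | succ n ih =>
      have hn' : n ≤ N k := le_trans (Nat.le_succ n) hn
      have hd : Disjoint (Ioc (0:ℝ) ((n:ℝ) * τk k)) (Ioc ((n:ℝ) * τk k) (((n:ℝ)+1) * τk k)) :=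
        (Set.Ioc_disjoint_Ioc_of_le le_rfl)
      have hun : Ioc (0:ℝ) ((n:ℝ) * τk k) ∪ Ioc ((n:ℝ) * τk k) (((n:ℝ)+1) * τk k)
          = Ioc (0:ℝ) (((n:ℝ)+1) * τk k) := by
        apply Ioc_union_Ioc_eq_Ioc
        · positivity
        · nlinarith [hτpos k]
      have hble : ((n:ℝ)+1) * τk k ≤ (N k : ℝ) * τk k := by
        have : ((n:ℝ)+1) ≤ (N k : ℝ) := by exact_mod_cast Nat.succ_le_of_lt (Nat.lt_of_lt_of_le (Nat.lt_succ_self n) hn)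
        exact mul_le_mul_of_nonneg_right this (hτpos k).le
      have h1 : ∫ r in Ioc (0:ℝ) (((n:ℝ)+1) * τk k), v k r
          = (∫ r in Ioc (0:ℝ) ((n:ℝ) * τk k), v k r)
            + ∫ r in Ioc ((n:ℝ) * τk k) (((n:ℝ)+1) * τk k), v k r := by
        rw [← hun]
        exact setIntegral_union hd measurableSet_Ioc
          ((hvint k hk1 _ _ (le_trans (by nlinarith [hτpos k]) hble)))
          ((hvint k hk1 _ _ hble))
      push_cast
      rw [h1, ih hn', hpiece, Finset.sum_range_succ]
  -- key estimate
  have hkey : ∀ k, τk k ≤ 1 → ∀ t ∈ Icc (0:ℝ) T,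
      ‖U k ⌈t / τk k⌉₊ - u₀ + ∫ r in Ioc (0:ℝ) t, v k r‖
        ≤ (T + 1) * ℓ (τk k) + M * τk k := by
    intro k hk1 t ht
    set n := ⌈t / τk k⌉₊ with hn
    have hnN : n ≤ N k := hidx k t (le_trans ht.2 (hTle k))
    have hτ' := hτpos k
    have hτne := hτ'.ne'
    have htn : t ≤ (n : ℝ) * τk k := by
      have := Nat.le_ceil (t / τk k)
      calc t = t / τk k * τk k := by field_simp
      _ ≤ (n : ℝ) * τk k := mul_le_mul_of_nonneg_right this (hτpos k).le
    have hnt : (n : ℝ) * τk k ≤ t + τk k := by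
      have h := Nat.ceil_lt_add_one (div_nonneg ht.1 hτ'.le)
      have := mul_le_mul_of_nonneg_right (le_of_lt h) hτ'.le
      have h0t : 0 ≤ t := ht.1
      calc (n : ℝ) * τk k ≤ (t / τk k + 1) * τk k := this
      _ = t + τk k := by field_simp
    have hnτT : (n:ℝ) * τk k ≤ T + 1 := by
      have h1 : (n : ℝ) ≤ (N k : ℝ) := by exact_mod_cast hnN
      have := mul_le_mul_of_nonneg_right h1 (hτpos k).le
      linarith [hNle k]
    have hnτN : (n:ℝ) * τk k ≤ (N k : ℝ) * τk k := by
      have h1 : (n : ℝ) ≤ (N k : ℝ) := by exact_mod_cast hnN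
      exact mul_le_mul_of_nonneg_right h1 (hτpos k).le
    have hsplit : ∫ r in Ioc (0:ℝ) ((n:ℝ) * τk k), v k r
        = (∫ r in Ioc (0:ℝ) t, v k r) + ∫ r in Ioc t ((n:ℝ) * τk k), v k r := by
      rw [← setIntegral_union ((Set.Ioc_disjoint_Ioc_of_le le_rfl)) measurableSet_Ioc
        (hvint k hk1 _ _ (le_trans ht.2 (hTle k))) (hvint k hk1 _ _ hnτN),
        Ioc_union_Ioc_eq_Ioc ht.1 htn]
    have hsum : ∫ r in Ioc (0:ℝ) ((n:ℝ) * τk k), v k r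
        = ∑ i ∈ Finset.range n, τk k • gradient φ (U k (i+1)) := hIoc k hk1 n hnN
    have htel : U k n - u₀ = ∑ i ∈ Finset.range n, (U k (i+1) - U k i) := by
      rw [Finset.sum_range_sub (fun i => U k i), hU0]
    have hid : U k n - u₀ + ∫ r in Ioc (0:ℝ) t, v k r
        = (∑ i ∈ Finset.range n, (U k (i+1) - U k i + τk k • gradient φ (U k (i+1))))
          - ∫ r in Ioc t ((n:ℝ) * τk k), v k r := by
      rw [Finset.sum_add_distrib, ← hsum, hsplit, ← htel]
      abel
    rw [hid]
    have hbd1 : ‖∑ i ∈ Finset.range n, (U k (i+1) - U k i + τk k • gradient φ (U k (i+1)))‖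
        ≤ (T + 1) * ℓ (τk k) := by
      calc ‖∑ i ∈ Finset.range n, (U k (i+1) - U k i + τk k • gradient φ (U k (i+1)))‖
          ≤ ∑ i ∈ Finset.range n, ‖U k (i+1) - U k i + τk k • gradient φ (U k (i+1))‖ :=
            norm_sum_le _ _
      _ ≤ ∑ _i ∈ Finset.range n, τk k * ℓ (τk k) :=
            Finset.sum_le_sum fun i _ => heuler k i
      _ = (n : ℝ) * τk k * ℓ (τk k) := by
            rw [Finset.sum_const, Finset.card_range]; push_cast; ring
      _ ≤ (T + 1) * ℓ (τk k) := mul_le_mul_of_nonneg_right hnτT (hℓnn _)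
    have hbd2 : ‖∫ r in Ioc t ((n:ℝ) * τk k), v k r‖ ≤ M * τk k := by
      have := norm_setIntegral_le_of_norm_le_const (μ := volume)
        (s := Ioc t ((n:ℝ) * τk k)) (C := M) measure_Ioc_lt_top
        (fun r hr => hvb k hk1 r (le_trans hr.2 hnτN))
      calc ‖∫ r in Ioc t ((n:ℝ) * τk k), v k r‖ ≤ M * (volume (Ioc t ((n:ℝ) * τk k))).toReal :=
            this
      _ ≤ M * τk k := by
            rw [Real.volume_Ioc]
            apply mul_le_mul_of_nonneg_left _ hMnn
            rcases le_total ((n:ℝ) * τk k) t with h | h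
            · rw [ENNReal.toReal_ofReal_eq_iff.mpr] <;> [skip; linarith]
              linarith [(hτpos k).le]
            · rw [ENNReal.toReal_ofReal (by linarith)]
              linarith
    calc ‖(∑ i ∈ Finset.range n, (U k (i+1) - U k i + τk k • gradient φ (U k (i+1))))
          - ∫ r in Ioc t ((n:ℝ) * τk k), v k r‖
        ≤ ‖∑ i ∈ Finset.range n, (U k (i+1) - U k i + τk k • gradient φ (U k (i+1)))‖
          + ‖∫ r in Ioc t ((n:ℝ) * τk k), v k r‖ := norm_sub_le _ _
    _ ≤ (T + 1) * ℓ (τk k) + M * τk k := add_le_add hbd1 hbd2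
  -- choose K with τ ≤ 1 beyond K
  obtain ⟨K, hK⟩ : ∃ K, ∀ k ≥ K, τk k ≤ 1 :=
    eventually_atTop.mp (hτ0.eventually (eventually_le_nhds one_pos))
  have hglim : ∀ r ∈ Icc (0:ℝ) T,
      Tendsto (fun k => v k r) atTop (nhds (gradient φ (u r))) := fun r hr =>
    (hgradc.tendsto (u r)).comp (hconv r hr)
  -- the integral identity
  have hid : ∀ t ∈ Icc (0:ℝ) T, u t = u₀ - ∫ r in Ioc (0:ℝ) t, gradient φ (u r) := by
    intro t ht
    have hDCT : Tendsto (fun k => ∫ r in Ioc (0:ℝ) t, v (k+K) r) atTop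
        (nhds (∫ r in Ioc (0:ℝ) t, gradient φ (u r))) := by
      apply tendsto_integral_of_dominated_convergence (bound := fun _ => M)
      · intro k; exact (hvmeas (k+K)).aestronglyMeasurable
      · exact integrableOn_const measure_Ioc_lt_top.ne
      · intro k
        refine (ae_restrict_iff' measurableSet_Ioc).mpr (Eventually.of_forall fun r hr => ?_)
        exact hvb (k+K) (hK _ (Nat.le_add_left K k)) r
          (le_trans (le_trans hr.2 ht.2) (hTle _))
      · refine (ae_restrict_iff' measurableSet_Ioc).mpr (Eventually.of_forall fun r hr => ?_)
        exact (hglim r ⟨hr.1.le, le_trans hr.2 ht.2⟩).comp (tendsto_add_atTop_nat K)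
    have hS : Tendsto (fun k => U (k+K) ⌈t / τk (k+K)⌉₊ - u₀ + ∫ r in Ioc (0:ℝ) t, v (k+K) r)
        atTop (nhds (u t - u₀ + ∫ r in Ioc (0:ℝ) t, gradient φ (u r))) :=
      (((hconv t ht).comp (tendsto_add_atTop_nat K)).sub_const u₀).add hDCT
    have hz : Tendsto (fun k => U (k+K) ⌈t / τk (k+K)⌉₊ - u₀ + ∫ r in Ioc (0:ℝ) t, v (k+K) r)
        atTop (nhds 0) := by
      apply squeeze_zero_norm (fun k => hkey (k+K) (hK _ (Nat.le_add_left K k)) t ht)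
      have h1 : Tendsto (fun k => (T+1) * ℓ (τk k) + M * τk k) atTop
          (nhds ((T+1) * 0 + M * 0)) := (hℓτ.const_mul (T+1)).add (hτ0.const_mul M)
      have := h1.comp (tendsto_add_atTop_nat K)
      rw [show (T+1) * (0:ℝ) + M * 0 = 0 by ring] at this
      exact this
    have h0 := tendsto_nhds_unique hS hz
    rw [← sub_eq_zero, show u t - (u₀ - ∫ r in Ioc (0:ℝ) t, gradient φ (u r))
      = u t - u₀ + ∫ r in Ioc (0:ℝ) t, gradient φ (u r) by abel]
    exact h0
  -- bound on u and its gradient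
  have hub : ∀ r ∈ Icc (0:ℝ) T, ‖u r‖ ≤ B := by
    intro r hr
    refine le_of_tendsto (hconv r hr).norm (eventually_atTop.mpr ⟨K, fun k hk => ?_⟩)
    exact hbound k (hK k hk) _ (hidx k r (le_trans hr.2 (hTle k)))
  have hgb : ∀ r ∈ Icc (0:ℝ) T, ‖gradient φ (u r)‖ ≤ M := fun r hr => hM _ (hub r hr)
  -- integrability of the limit gradient
  have hgmeas : AEStronglyMeasurable (fun r => gradient φ (u r))
      (volume.restrict (Ioc (0:ℝ) T)) := by
    apply aestronglyMeasurable_of_tendsto_ae atTop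
      (fun k => (hvmeas (k+K)).aestronglyMeasurable)
    refine (ae_restrict_iff' measurableSet_Ioc).mpr (Eventually.of_forall fun r hr => ?_)
    exact (hglim r ⟨hr.1.le, hr.2⟩).comp (tendsto_add_atTop_nat K)
  have hgint : ∀ a b : ℝ, 0 ≤ a → b ≤ T → IntegrableOn (fun r => gradient φ (u r)) (Ioc a b) := by
    intro a b ha hb
    have hbase : IntegrableOn (fun r => gradient φ (u r)) (Ioc (0:ℝ) T) := by
      apply Integrable.mono' (g := fun _ => M)
        (integrableOn_const measure_Ioc_lt_top.ne) hgmeas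
      refine (ae_restrict_iff' measurableSet_Ioc).mpr (Eventually.of_forall fun r hr => ?_)
      exact hgb r ⟨hr.1.le, hr.2⟩
    exact hbase.mono_set (Ioc_subset_Ioc ha hb)
  -- u is Lipschitz on [0,T]
  have hulip : ∀ s ∈ Icc (0:ℝ) T, ∀ t ∈ Icc (0:ℝ) T, s ≤ t → ‖u t - u s‖ ≤ M * (t - s) := by
    intro s hs t ht hst
    have h1 := hid s hs
    have h2 := hid t ht
    have hsplit : ∫ r in Ioc (0:ℝ) t, gradient φ (u r)
        = (∫ r in Ioc (0:ℝ) s, gradient φ (u r)) + ∫ r in Ioc s t, gradient φ (u r) := by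
      rw [← setIntegral_union (Set.Ioc_disjoint_Ioc_of_le le_rfl) measurableSet_Ioc
        (hgint 0 s le_rfl hs.2) (hgint s t hs.1 ht.2), Ioc_union_Ioc_eq_Ioc hs.1 hst]
    have h3 : u t - u s = -∫ r in Ioc s t, gradient φ (u r) := by
      rw [h1, h2, hsplit]; abel
    rw [h3, norm_neg]
    have h4 := norm_setIntegral_le_of_norm_le_const (μ := volume) (s := Ioc s t) (C := M)
      measure_Ioc_lt_top (fun r hr => hgb r ⟨le_trans hs.1 hr.1.le, le_trans hr.2 ht.2⟩)
    calc ‖∫ r in Ioc s t, gradient φ (u r)‖ ≤ M * (volume (Ioc s t)).toReal := h4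
    _ = M * (t - s) := by rw [Real.volume_Ioc, ENNReal.toReal_ofReal (by linarith)]
  have hucont : ContinuousOn u (Icc 0 T) := by
    have hL : LipschitzOnWith (Real.toNNReal M) u (Icc 0 T) := by
      apply LipschitzOnWith.of_dist_le_mul
      intro x hx y hy
      rw [dist_eq_norm, dist_eq_norm, Real.coe_toNNReal M hMnn]
      rcases le_total x y with h | h
      · rw [show ‖u x - u y‖ = ‖u y - u x‖ by rw [norm_sub_rev],
          show ‖x - y‖ = y - x by rw [norm_sub_rev]; exact Real.norm_of_nonneg (by linarith)]
        exact hulip x hx y hy h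
      · rw [show ‖x - y‖ = x - y from Real.norm_of_nonneg (by linarith)]
        exact hulip y hy x hx h
    exact hL.continuousOn
  have hgcont : ContinuousOn (fun r => gradient φ (u r)) (Icc 0 T) :=
    hgradc.comp_continuousOn hucont
  -- fundamental theorem of calculus
  intro t ht
  haveI : Fact (t ∈ Icc (0:ℝ) T) := ⟨ht⟩
  have hF : IntervalIntegrable (fun r => gradient φ (u r)) volume 0 t := by
    apply ContinuousOn.intervalIntegrable
    rw [uIcc_of_le ht.1]
    exact hgcont.mono (Icc_subset_Icc le_rfl ht.2)
  have hmeasat : StronglyMeasurableAtFilter (fun r => gradient φ (u r))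
      (nhdsWithin t (Icc 0 T)) volume :=
    ⟨Icc 0 T, self_mem_nhdsWithin, hgcont.aestronglyMeasurable measurableSet_Icc⟩
  have hG : HasDerivWithinAt (fun y => ∫ r in (0:ℝ)..y, gradient φ (u r))
      (gradient φ (u t)) (Icc 0 T) t :=
    intervalIntegral.integral_hasDerivWithinAt_right hF hmeasat (hgcont t ht)
  have heqOn : ∀ y ∈ Icc (0:ℝ) T, u y = u₀ - ∫ r in (0:ℝ)..y, gradient φ (u r) := by
    intro y hy
    rw [intervalIntegral.integral_of_le hy.1]
    exact hid y hy
  have hd : HasDerivWithinAt (fun y => u₀ - ∫ r in (0:ℝ)..y, gradient φ (u r))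
      (-(gradient φ (u t))) (Icc 0 T) t := hG.const_sub u₀
  exact hd.congr heqOn (heqOn t ht)
end
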